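/- Let k1 > 0, k2 < 0 with k1 + 4k2 > 0. Then (i) k1² + 4k1k2 > 0; (ii) λ := (k1 + 2k2 − √(k1² + 4k1k2))/(−2k2) satisfies 0 < λ < 1; (iii) σ = 1 and σ = λ are roots of the characteristic polynomial p(σ) = −k2 σ⁴ − k1 σ³ + (2k1 + 2k2) σ² − k1 σ − k2; and consequently (iv) the geometric sequence v : ℤ → ℝ, v_i = λ^i, satisfies −k1 (v_{i−1} − 2v_i + v_{i+1}) − k2 (v_{i−2} − 2v_i + v_{i+2}) = 0 for every i ∈ ℤ. -/

import Mathlib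

/-- properties of the exponential decay rate λ and the
characteristic polynomial of the atomistic operator. -/
theorem characteristic_roots (k1 k2 : ℝ)
    (hk1 : 0 < k1) (hk2 : k2 < 0) (hk : 0 < k1 + 4 * k2) :
    let lam := (k1 + 2 * k2 - Real.sqrt (k1 ^ 2 + 4 * k1 * k2)) / (-2 * k2)
    -- (i)
    0 < k1 ^ 2 + 4 * k1 * k2 ∧
    -- (ii)
    (0 < lam ∧ lam < 1) ∧
    -- (iii): σ = 1 and σ = λ are roots of the characteristic polynomial
    (-k2 * (1 : ℝ) ^ 4 - k1 * 1 ^ 3 + (2 * k1 + 2 * k2) * 1 ^ 2 - k1 * 1 - k2 = 0) ∧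
    (-k2 * lam ^ 4 - k1 * lam ^ 3 + (2 * k1 + 2 * k2) * lam ^ 2 - k1 * lam - k2 = 0) ∧
    -- (iv): the geometric sequence v_i = λ^i is annihilated by the atomistic operator
    (∀ i : ℤ,
      -k1 * (lam ^ (i - 1) - 2 * lam ^ i + lam ^ (i + 1))
        - k2 * (lam ^ (i - 2) - 2 * lam ^ i + lam ^ (i + 2)) = 0) := by
  intro lam
  have hD : 0 < k1 ^ 2 + 4 * k1 * k2 := by nlinarith
  have hs := Real.sq_sqrt hD.le
  have hsnn := Real.sqrt_nonneg (k1 ^ 2 + 4 * k1 * k2)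
  set s := Real.sqrt (k1 ^ 2 + 4 * k1 * k2) with hs_def
  have hb : 0 < k1 + 2 * k2 := by linarith
  have hslt : s < k1 + 2 * k2 := by nlinarith
  have hsgt : k1 + 4 * k2 < s := by nlinarith
  have hden : 0 < -2 * k2 := by linarith
  have hlam0 : 0 < lam := div_pos (by linarith) hden
  have hlam1 : lam < 1 := by
    rw [div_lt_one hden]; linarith
  -- the quadratic relation k2 λ² + (k1+2k2) λ + k2 = 0
  have hq : k2 * lam ^ 2 + (k1 + 2 * k2) * lam + k2 = 0 := by
    have hk2ne : k2 ≠ 0 := ne_of_lt hk2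
    have : lam * (-2 * k2) = k1 + 2 * k2 - s := by
      exact div_mul_cancel₀ _ (ne_of_gt hden)
    nlinarith [this, hs]
  have hp : -k2 * lam ^ 4 - k1 * lam ^ 3 + (2 * k1 + 2 * k2) * lam ^ 2
      - k1 * lam - k2 = 0 := by nlinarith [hq, sq_nonneg (lam - 1)]
  refine ⟨hD, ⟨hlam0, hlam1⟩, by ring, hp, ?_⟩
  intro i
  have hne : lam ≠ 0 := ne_of_gt hlam0
  have e : ∀ n : ℕ, lam ^ (i - 2) * lam ^ n = lam ^ (i - 2 + n) := by
    intro n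
    rw [← zpow_natCast lam n, ← zpow_add₀ hne]
  have e1 : lam ^ (i - 1) = lam ^ (i - 2) * lam ^ (1 : ℕ) := by
    rw [e]; congr 1; ring
  have e2 : lam ^ i = lam ^ (i - 2) * lam ^ (2 : ℕ) := by
    rw [e]; congr 1; ring
  have e3 : lam ^ (i + 1) = lam ^ (i - 2) * lam ^ (3 : ℕ) := by
    rw [e]; congr 1; ring
  have e4 : lam ^ (i + 2) = lam ^ (i - 2) * lam ^ (4 : ℕ) := by
    rw [e]; congr 1; ring
  rw [e1, e2, e3, e4]
  linear_combination lam ^ (i - 2) * hp
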